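/- Let 𝔸 = (A₁,…,A_T) be row-stochastic N×N matrices, α^{(0)},…,α^{(K)} probability vectors, X ∈ ℝ^{N×F}, W ∈ ℝ^{F×d}. Define the GTN output adjacency A^{(K)} recursively by A^{(0)} = α^{(0)}·𝔸 and A^{(k)} = (D̂^{(k)})^{-1} A^{(k-1)}(α^{(k)}·𝔸), where D̂^{(k)} is the degree matrix of A^{(k-1)}(α^{(k)}·𝔸}. Then A^{(K)} X W = (α^{(0)}·𝔸)((α^{(1)}·𝔸)(⋯((α^{(K)}·𝔸) X W))), i.e., the explicit GTN graph transformation equals the implicit FastGTN feature-propagation computation. -/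

import Mathlib

open Matrix BigOperators
open Fin.NatCast

def RowStochastic {N : ℕ} (M : Matrix (Fin N) (Fin N) ℝ) : Prop :=
  ∀ i, ∑ j, M i j = 1

/-- Inverse of the diagonal degree matrix of a matrix. -/
noncomputable def degInv {N : ℕ} (M : Matrix (Fin N) (Fin N) ℝ) : Matrix (Fin N) (Fin N) ℝ :=
  Matrix.diagonal (fun i => (∑ j, M i j)⁻¹)

lemma rs_mul {N : ℕ} {M P : Matrix (Fin N) (Fin N) ℝ}
    (hM : RowStochastic M) (hP : RowStochastic P) : RowStochastic (M * P) := by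
  intro i
  simp only [Matrix.mul_apply]
  rw [Finset.sum_comm]
  calc ∑ k, ∑ j, M i k * P k j = ∑ k, M i k :=
        Finset.sum_congr rfl fun k _ => by rw [← Finset.mul_sum, hP k, mul_one]
    _ = 1 := hM i

lemma rs_comb {N T : ℕ} (A : Fin T → Matrix (Fin N) (Fin N) ℝ)
    (hA : ∀ t, RowStochastic (A t)) (c : Fin T → ℝ) (hc : ∑ t, c t = 1) :
    RowStochastic (∑ t, c t • A t) := by
  intro i
  simp only [Matrix.sum_apply, Matrix.smul_apply, smul_eq_mul]
  rw [Finset.sum_comm]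
  calc ∑ t, ∑ j, c t * A t i j = ∑ t, c t :=
        Finset.sum_congr rfl fun t _ => by rw [← Finset.mul_sum, hA t i, mul_one]
    _ = 1 := hc

lemma degInv_rs {N : ℕ} {M : Matrix (Fin N) (Fin N) ℝ}
    (hM : RowStochastic M) : degInv M = 1 := by
  unfold degInv
  have : (fun i => (∑ j, M i j)⁻¹) = fun _ => (1 : ℝ) := by
    funext i; rw [hM i]; norm_num
  rw [this, Matrix.diagonal_one]

lemma foldr_mul_eq_prod_mul {N d : ℕ} (l : List (Matrix (Fin N) (Fin N) ℝ))
    (M : Matrix (Fin N) (Fin d) ℝ) :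
    l.foldr (· * ·) M = l.prod * M := by
  induction l with
  | nil => simp
  | cons a l ih => simp [ih, Matrix.mul_assoc]

theorem gtn_eq_fastgtn {N T K F d : ℕ}
    (A : Fin T → Matrix (Fin N) (Fin N) ℝ)
    (α : Fin (K + 1) → Fin T → ℝ)
    (hA : ∀ t, RowStochastic (A t))
    (hα0 : ∀ k t, 0 ≤ α k t) (hα1 : ∀ k, ∑ t, α k t = 1)
    (X : Matrix (Fin N) (Fin F) ℝ) (W : Matrix (Fin F) (Fin d) ℝ)
    (Aseq : ℕ → Matrix (Fin N) (Fin N) ℝ)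
    (h0 : Aseq 0 = ∑ t, α 0 t • A t)
    (hrec : ∀ k : ℕ, k < K →
      Aseq (k + 1) =
        degInv (Aseq k * ∑ t, α (k + 1) t • A t) * (Aseq k * ∑ t, α (k + 1) t • A t)) :
    Aseq K * X * W =
      (List.ofFn (fun k : Fin (K + 1) => ∑ t, α k t • A t)).foldr (· * ·) (X * W) := by
  set B : Fin (K + 1) → Matrix (Fin N) (Fin N) ℝ := fun k => ∑ t, α k t • A t with hB
  have hBrs : ∀ k, RowStochastic (B k) := fun k => rs_comb A hA (α k) (hα1 k)
  -- main induction: Aseq n is the product of the first n+1 combos, and is row stochastic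
  have main : ∀ n (h : n ≤ K),
      Aseq n = (List.ofFn (fun i : Fin (n + 1) => B (Fin.castLE (by omega) i))).prod ∧
      RowStochastic (Aseq n) := by
    intro n
    induction n with
    | zero =>
      intro _
      constructor
      · rw [h0]
        simp [List.ofFn_succ, hB]
      · rw [h0]; exact hBrs ⟨0, by omega⟩
    | succ m ih =>
      intro h
      obtain ⟨hprod, hrs⟩ := ih (by omega)
      have hcast : ((m : Fin (K + 1)) + 1) = (⟨m + 1, by omega⟩ : Fin (K + 1)) := by
        apply Fin.ext
        simp [Fin.val_add, Fin.val_natCast,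
          Nat.mod_eq_of_lt (show m < K + 1 by omega),
          Nat.mod_eq_of_lt (show m + 1 < K + 1 by omega),
          Nat.mod_eq_of_lt (show 1 < K + 1 by omega)]
      have hstep : Aseq (m + 1) = Aseq m * B (Fin.castLE (by omega) (Fin.last (m + 1))) := by
        rw [hrec m (by omega), hcast]
        have : RowStochastic (Aseq m * ∑ t, α ⟨m + 1, by omega⟩ t • A t) :=
          rs_mul hrs (hBrs ⟨m + 1, by omega⟩)
        rw [degInv_rs this, Matrix.one_mul]
        rfl
      constructor
      · rw [hstep, hprod]
        rw [List.ofFn_succ' (fun i : Fin (m + 2) => B (Fin.castLE (by omega) i))]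
        rw [List.concat_eq_append, List.prod_append]
        simp only [List.prod_cons, List.prod_nil, Matrix.mul_one]
        rfl
      · rw [hstep]; exact rs_mul hrs (hBrs _)
  obtain ⟨hprod, _⟩ := main K le_rfl
  rw [Matrix.mul_assoc, foldr_mul_eq_prod_mul, hprod]
  rfl
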